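/- Let G = ∫_0^1 1/(1 − log v) dv (natural logarithm, integral over (0,1)). Then for every natural number n, G = ∑_{k=0}^{n-1} (-1)^k · k! + (-1)^n · n! · ∫_0^1 (1 − log v)^{-(n+1)} dv. -/

import Mathlib

open MeasureTheory Set Real Filter intervalIntegral

lemma one_le_sub_log {v : ℝ} (h0 : 0 < v) (h1 : v ≤ 1) : 1 ≤ 1 - Real.log v := by
  nlinarith [Real.log_nonpos h0.le h1]

lemma integrableOn_pow_inv (m : ℕ) :
    IntegrableOn (fun v : ℝ => 1 / (1 - Real.log v) ^ m) (Set.Ioc (0:ℝ) 1) := by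
  apply Measure.integrableOn_of_bounded (M := 1) (by simp)
  · exact (measurable_const.div ((measurable_const.sub Real.measurable_log).pow_const m)).aestronglyMeasurable
  · filter_upwards [ae_restrict_mem measurableSet_Ioc] with v hv
    have h1 := one_le_sub_log hv.1 hv.2
    have hp : (1:ℝ) ≤ (1 - Real.log v) ^ m := one_le_pow₀ h1
    rw [Real.norm_eq_abs, abs_of_nonneg (by positivity)]
    rw [div_le_one (by positivity)]
    exact hp

lemma hasDerivAt_aux (n : ℕ) {v : ℝ} (h0 : 0 < v) (h1 : v ≤ 1) :
    HasDerivAt (fun v : ℝ => v / (1 - Real.log v) ^ (n+1))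
      (1 / (1 - Real.log v) ^ (n+1) + (n+1) * (1 / (1 - Real.log v) ^ (n+2))) v := by
  have hL : (1:ℝ) ≤ 1 - Real.log v := one_le_sub_log h0 h1
  have hne : (1 - Real.log v) ≠ 0 := by positivity
  have h1' : HasDerivAt (fun v : ℝ => 1 - Real.log v) (-v⁻¹) v := by
    simpa using ((Real.hasDerivAt_log h0.ne').const_sub 1)
  have h2 : HasDerivAt (fun v : ℝ => (1 - Real.log v) ^ (n+1))
      ((n+1) * (1 - Real.log v) ^ n * (-v⁻¹)) v := by
    simpa using h1'.fun_pow (n+1)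
  have h3 : HasDerivAt (fun v : ℝ => v / (1 - Real.log v) ^ (n+1))
      ((1 * (1 - Real.log v) ^ (n+1) - v * ((n+1) * (1 - Real.log v) ^ n * (-v⁻¹)))
        / ((1 - Real.log v) ^ (n+1)) ^ 2) v :=
    (hasDerivAt_id v).div h2 (pow_ne_zero _ hne)
  convert h3 using 1
  field_simp
  ring

lemma key_rec (n : ℕ) :
    (∫ v in Set.Ioo (0:ℝ) 1, 1 / (1 - Real.log v) ^ (n+1)) =
      1 - (n+1) * ∫ v in Set.Ioo (0:ℝ) 1, 1 / (1 - Real.log v) ^ (n+2) := by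
  set h : ℝ → ℝ := fun v => 1 / (1 - Real.log v) ^ (n+1) + (n+1) * (1 / (1 - Real.log v) ^ (n+2)) with hh
  have hint : IntegrableOn h (Set.Ioc (0:ℝ) 1) :=
    (integrableOn_pow_inv (n+1)).add ((integrableOn_pow_inv (n+2)).const_mul _)
  have hintIcc : IntegrableOn h (Set.Icc (0:ℝ) 1) := by
    rwa [integrableOn_Icc_iff_integrableOn_Ioc]
  -- FTC on [a,1] for a ∈ Ioo 0 1
  have step1 : ∀ a ∈ Set.Ioo (0:ℝ) 1, (∫ v in a..1, h v) = 1 - a / (1 - Real.log a) ^ (n+1) := by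
    intro a ha
    have := intervalIntegral.integral_eq_sub_of_hasDerivAt (a := a) (b := 1)
      (f := fun v : ℝ => v / (1 - Real.log v) ^ (n+1)) (f' := h)
      (fun v hv => by
        rw [Set.uIcc_of_le ha.2.le] at hv
        exact hasDerivAt_aux n (lt_of_lt_of_le ha.1 hv.1) hv.2)
      ((intervalIntegrable_iff_integrableOn_Ioc_of_le ha.2.le).2
        (hint.mono_set (Set.Ioc_subset_Ioc ha.1.le le_rfl)))
    rw [this]
    have hL : (1:ℝ) ≤ 1 - Real.log a := one_le_sub_log ha.1 ha.2.le
    simp only [Real.log_one, sub_zero, one_pow, div_one]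
  -- continuity of primitive at 0
  have hcont : ContinuousWithinAt (fun a => ∫ v in a..1, h v) (Set.Icc (0:ℝ) 1) 0 := by
    have := intervalIntegral.continuousOn_primitive_interval_left
      (f := h) (a := (0:ℝ)) (b := 1) (μ := volume) (by rwa [Set.uIcc_of_le zero_le_one])
    rw [Set.uIcc_of_le zero_le_one] at this
    exact this 0 (Set.left_mem_Icc.2 zero_le_one)
  have hT1 : Tendsto (fun a => ∫ v in a..1, h v) (nhdsWithin 0 (Set.Ioo (0:ℝ) 1))
      (nhds (∫ v in (0:ℝ)..1, h v)) :=
    hcont.tendsto.mono_left (nhdsWithin_mono 0 Set.Ioo_subset_Icc_self)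
  -- the other limit
  have hT2 : Tendsto (fun a : ℝ => 1 - a / (1 - Real.log a) ^ (n+1))
      (nhdsWithin 0 (Set.Ioo (0:ℝ) 1)) (nhds 1) := by
    have hz : Tendsto (fun a : ℝ => a / (1 - Real.log a) ^ (n+1))
        (nhdsWithin 0 (Set.Ioo (0:ℝ) 1)) (nhds 0) := by
      apply squeeze_zero' (f := fun a : ℝ => a / (1 - Real.log a) ^ (n+1)) (g := fun a : ℝ => a)
      · filter_upwards [self_mem_nhdsWithin] with a ha
        have hL : (1:ℝ) ≤ 1 - Real.log a := one_le_sub_log ha.1 ha.2.le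
        exact div_nonneg ha.1.le (by positivity)
      · filter_upwards [self_mem_nhdsWithin] with a ha
        have hL : (1:ℝ) ≤ 1 - Real.log a := one_le_sub_log ha.1 ha.2.le
        have : (1:ℝ) ≤ (1 - Real.log a) ^ (n+1) := one_le_pow₀ hL
        rw [div_le_iff₀ (by positivity)]
        nlinarith [ha.1.le]
      · exact tendsto_id.mono_left nhdsWithin_le_nhds
    have := (tendsto_const_nhds (x := (1:ℝ))).sub hz
    simpa using this
  have hne : (nhdsWithin (0:ℝ) (Set.Ioo (0:ℝ) 1)).NeBot := by
    apply mem_closure_iff_nhdsWithin_neBot.1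
    rw [closure_Ioo one_ne_zero.symm]
    exact Set.left_mem_Icc.2 zero_le_one
  have heq : (∫ v in (0:ℝ)..1, h v) = 1 := by
    refine tendsto_nhds_unique (hT1.congr' ?_) hT2
    filter_upwards [self_mem_nhdsWithin] with a ha using step1 a ha
  have hIoc : (∫ v in Set.Ioc (0:ℝ) 1, h v) = 1 := by
    rwa [intervalIntegral.integral_of_le zero_le_one] at heq
  have hIoo : (∫ v in Set.Ioo (0:ℝ) 1, h v) = 1 := by
    rwa [MeasureTheory.integral_Ioc_eq_integral_Ioo] at hIoc
  have hsplit : (∫ v in Set.Ioo (0:ℝ) 1, h v) =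
      (∫ v in Set.Ioo (0:ℝ) 1, 1 / (1 - Real.log v) ^ (n+1)) +
      (n+1) * ∫ v in Set.Ioo (0:ℝ) 1, 1 / (1 - Real.log v) ^ (n+2) := by
    rw [hh]
    rw [MeasureTheory.integral_add ((integrableOn_pow_inv (n+1)).mono_set Set.Ioo_subset_Ioc_self)
      (((integrableOn_pow_inv (n+2)).mono_set Set.Ioo_subset_Ioc_self).const_mul _),
      MeasureTheory.integral_const_mul]
  rw [hsplit] at hIoo
  linarith

/-- Euler's factorial series with remainder (§20): with `G = ∫_0^1 dv/(1 - log v)`,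
for every `n`, `G = ∑_{k=0}^{n-1} (-1)^k k! + (-1)^n n! ∫_0^1 (1 - log v)^{-(n+1)} dv`. -/
theorem gompertz_factorial_series_remainder
    (G : ℝ) (hG : G = ∫ v in Set.Ioo (0 : ℝ) 1, 1 / (1 - Real.log v)) :
    ∀ n : ℕ,
      G = (∑ k ∈ Finset.range n, (-1 : ℝ) ^ k * (Nat.factorial k : ℝ)) +
        (-1 : ℝ) ^ n * (Nat.factorial n : ℝ) *
          ∫ v in Set.Ioo (0 : ℝ) 1, 1 / (1 - Real.log v) ^ (n + 1) := by
  intro n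
  induction n with
  | zero => simpa [pow_one] using hG
  | succ n ih =>
    rw [key_rec n] at ih
    rw [Finset.sum_range_succ, ih]
    push_cast [Nat.factorial_succ]
    ring
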